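/- For n ≥ 2 and 0 < μ ≤ (1/n)((n-1)/n)^(n-1), one has Q(μ^(1/(n-1))) ≤ n² and Q(1) ≤ n², where Q(t) = n t²(1 + (n-1)μ² t^(-2n)). -/
import Mathlib


/-- For `n ≥ 2` and `0 < μ ≤ (1/n)((n-1)/n)^(n-1)`, one has
`Q(μ^(1/(n-1))) ≤ n²` and `Q(1) ≤ n²`, where `Q(t) = n t² (1 + (n-1) μ² t^(-2n))`. -/
theorem delaunay_potential_Q_endpoint_bounds (n : ℕ) (hn : 2 ≤ n) (μ : ℝ)
    (hμ : 0 < μ) (hμ' : μ ≤ (1 / n) * (((n : ℝ) - 1) / n) ^ (n - 1)) :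
    (n : ℝ) * (μ ^ (1 / ((n : ℝ) - 1))) ^ 2 *
        (1 + ((n : ℝ) - 1) * μ ^ 2 / (μ ^ (1 / ((n : ℝ) - 1))) ^ (2 * n)) ≤ (n : ℝ) ^ 2 ∧
    (n : ℝ) * (1 : ℝ) ^ 2 * (1 + ((n : ℝ) - 1) * μ ^ 2 / (1 : ℝ) ^ (2 * n)) ≤ (n : ℝ) ^ 2 := by
  have hn2 : (2:ℝ) ≤ (n:ℝ) := by exact_mod_cast hn
  have ha : (0:ℝ) < (n:ℝ) - 1 := by linarith
  set u : ℝ := μ ^ (1 / ((n : ℝ) - 1)) with hudef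
  have hu : 0 < u := Real.rpow_pos_of_pos hμ _
  -- μ ≤ 1
  have hcast : ((n - 1 : ℕ) : ℝ) = (n:ℝ) - 1 := by
    have : 1 ≤ n := by omega
    push_cast [Nat.cast_sub this]; ring
  have hbn : (0:ℝ) ≤ ((n:ℝ) - 1) / n := by positivity
  have hbn1 : ((n:ℝ) - 1) / n ≤ 1 := by
    rw [div_le_one (by linarith)]; linarith
  have hμ1 : μ ≤ 1 := by
    have hp : (((n:ℝ) - 1) / n) ^ (n - 1) ≤ 1 := pow_le_one₀ hbn hbn1
    have h1n : (1:ℝ) / n ≤ 1 := by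
      rw [div_le_one (by linarith)]; linarith
    have : (1 / (n:ℝ)) * (((n:ℝ) - 1) / n) ^ (n - 1) ≤ 1 * 1 := by
      apply mul_le_mul h1n hp (by positivity) (by linarith)
    linarith
  have hu1 : u ≤ 1 := Real.rpow_le_one hμ.le hμ1 (by positivity)
  -- μ = u ^ (n-1)
  have hμu : u ^ (n - 1) = μ := by
    rw [hudef, ← Real.rpow_natCast (μ ^ (1 / ((n : ℝ) - 1))) (n - 1), hcast,
      ← Real.rpow_mul hμ.le, one_div_mul_cancel ha.ne', Real.rpow_one]
  constructor
  · have hpow : u ^ (2 * n) = u ^ (2 * (n - 1)) * u ^ 2 := by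
      rw [← pow_add]; congr 1; omega
    have key : (n : ℝ) * u ^ 2 * (1 + ((n : ℝ) - 1) * μ ^ 2 / u ^ (2 * n))
        = (n : ℝ) * u ^ 2 + (n : ℝ) * ((n:ℝ) - 1) := by
      rw [← hμu, ← pow_mul, hpow]
      have h2 : u ^ (2 * (n - 1)) ≠ 0 := by positivity
      have h3 : u ≠ 0 := hu.ne'
      field_simp
      ring
    rw [key]
    have hu2 : u ^ 2 ≤ 1 := pow_le_one₀ hu.le hu1
    nlinarith [hu.le]
  · have hμ2 : μ ^ 2 ≤ 1 := pow_le_one₀ hμ.le hμ1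
    simp only [one_pow, mul_one, div_one]
    nlinarith [mul_nonneg (mul_nonneg (by linarith : (0:ℝ) ≤ (n:ℝ)) (by linarith : (0:ℝ) ≤ (n:ℝ) - 1)) (by linarith : (0:ℝ) ≤ 1 - μ ^ 2)]
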